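/- For every λ ∈ ℝ, every μ > 0 and every ψ ∈ L²(ℝ,ℂ), the Bochner integral ∫_0^∞ e^{−μt} U_t ψ dt (taken in L²(ℝ,ℂ)) is represented almost everywhere by the function R_μψ(x) = ∫_0^∞ e^{−μt} ψ(x − t) dt + 𝟙_{(0,∞)}(x)·(e^{iλ} − 1)·e^{−μx}·∫_0^∞ e^{−μt} ψ(−t) dt. -/

import Mathlib

open MeasureTheory Complex

open Set
open scoped ENNReal

noncomputable section

namespace ResolventAux

lemma sq_integrable (f : Lp ℂ 2 (volume : Measure ℝ)) :
    Integrable (fun x => ‖(f : ℝ → ℂ) x‖ ^ 2) volume := by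
  have h := (Lp.memLp f).norm_rpow two_ne_zero ENNReal.ofNat_ne_top
  rw [memLp_one_iff_integrable] at h
  have heq : (fun x => ‖(f : ℝ → ℂ) x‖ ^ (2 : ℝ≥0∞).toReal) = fun x => ‖(f : ℝ → ℂ) x‖ ^ 2 := by
    funext x
    rw [ENNReal.toReal_ofNat, show ((2:ℝ)) = ((2:ℕ):ℝ) by norm_num, Real.rpow_natCast]
  rwa [heq] at h

variable {m : ℝ → ℂ}

lemma memℒp_mul (hm : Measurable m) (hn : ∀ x, ‖m x‖ = 1) (f : Lp ℂ 2 (volume : Measure ℝ)) :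
    MemLp (fun x => m x * (f : ℝ → ℂ) x) 2 volume := by
  refine ⟨hm.aestronglyMeasurable.mul (Lp.aestronglyMeasurable f), ?_⟩
  rw [eLpNorm_congr_norm_ae (g := (f : ℝ → ℂ)) (Filter.Eventually.of_forall fun x => by
    rw [norm_mul, hn x, one_mul])]
  exact Lp.eLpNorm_lt_top f

def mulU (hm : Measurable m) (hn : ∀ x, ‖m x‖ = 1) (f : Lp ℂ 2 (volume : Measure ℝ)) :
    Lp ℂ 2 (volume : Measure ℝ) := (memℒp_mul hm hn f).toLp _

lemma coeFn_mulU (hm : Measurable m) (hn : ∀ x, ‖m x‖ = 1) (f : Lp ℂ 2 (volume : Measure ℝ)) :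
    mulU hm hn f =ᵐ[volume] fun x => m x * (f : ℝ → ℂ) x :=
  MemLp.coeFn_toLp _

lemma isometry_mulU (hm : Measurable m) (hn : ∀ x, ‖m x‖ = 1) :
    Isometry (mulU hm hn) := by
  refine Isometry.of_dist_eq fun f g => ?_
  rw [Lp.dist_def, Lp.dist_def]
  congr 1
  apply eLpNorm_congr_norm_ae
  filter_upwards [coeFn_mulU hm hn f, coeFn_mulU hm hn g] with x h1 h2
  simp only [Pi.sub_apply, h1, h2]
  rw [← mul_sub, norm_mul, hn x, one_mul]

lemma norm_mulU (hm : Measurable m) (hn : ∀ x, ‖m x‖ = 1) (f : Lp ℂ 2 (volume : Measure ℝ)) :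
    ‖mulU hm hn f‖ = ‖f‖ := by
  rw [mulU, Lp.norm_toLp _ (memℒp_mul hm hn f), Lp.norm_def]
  congr 1
  apply eLpNorm_congr_norm_ae
  exact Filter.Eventually.of_forall fun x => by rw [norm_mul, hn x, one_mul]

def mfun (a : ℝ) (x : ℝ) : ℂ := if 0 ≤ x then Complex.exp (Complex.I * a) else 1

lemma mfun_meas (a : ℝ) : Measurable (mfun a) :=
  Measurable.ite measurableSet_Ici measurable_const measurable_const

lemma mfun_norm (a : ℝ) (x : ℝ) : ‖mfun a x‖ = 1 := by
  unfold mfun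
  split
  · simp [Complex.norm_exp]
  · simp

lemma mfun_mul (a t x : ℝ) (ht : 0 ≤ t) :
    mfun a x * mfun (-a) (x - t) =
      1 + (Complex.exp (Complex.I * a) - 1) * (Ico (0:ℝ) t).indicator 1 x := by
  unfold mfun
  rcases le_or_gt 0 x with h0 | h0
  · rcases lt_or_ge x t with h1 | h1
    · rw [if_pos h0, if_neg (by linarith : ¬ (0:ℝ) ≤ x - t),
        indicator_of_mem (mem_Ico.mpr ⟨h0, h1⟩)]
      simp only [Pi.one_apply]
      ring
    · rw [if_pos h0, if_pos (by linarith : (0:ℝ) ≤ x - t),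
        indicator_of_notMem (by simp only [mem_Ico, not_and, not_lt]; intro _; linarith)]
      rw [← Complex.exp_add]
      have : Complex.I * ↑a + Complex.I * ↑(-a) = 0 := by push_cast; ring
      rw [this, Complex.exp_zero]
      ring
  · rw [if_neg (not_le.mpr h0), if_neg (by push_neg; linarith : ¬ (0:ℝ) ≤ x - t),
      indicator_of_notMem (by simp only [mem_Ico, not_and, not_lt]; intro h; linarith)]
    ring


def Vop (lam : ℝ) (ψ : Lp ℂ 2 (volume : Measure ℝ)) (t : ℝ) : Lp ℂ 2 (volume : Measure ℝ) :=
  mulU (mfun_meas lam) (mfun_norm lam)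
    (Lp.compMeasurePreserving (fun x => x - t) (measurePreserving_sub_right volume t)
      (mulU (mfun_meas (-lam)) (mfun_norm (-lam)) ψ))

lemma Vop_coe (lam : ℝ) (ψ : Lp ℂ 2 (volume : Measure ℝ)) (t : ℝ) :
    (Vop lam ψ t : ℝ → ℂ) =ᵐ[volume]
      fun x => mfun lam x * (mfun (-lam) (x - t) * (ψ : ℝ → ℂ) (x - t)) := by
  have h1 := coeFn_mulU (mfun_meas lam) (mfun_norm lam)
    (Lp.compMeasurePreserving (fun x => x - t) (measurePreserving_sub_right volume t)
      (mulU (mfun_meas (-lam)) (mfun_norm (-lam)) ψ))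
  have h2 := Lp.coeFn_compMeasurePreserving
    (mulU (mfun_meas (-lam)) (mfun_norm (-lam)) ψ) (measurePreserving_sub_right volume t)
  have h3 := (measurePreserving_sub_right volume t).quasiMeasurePreserving.ae_eq_comp
    (coeFn_mulU (mfun_meas (-lam)) (mfun_norm (-lam)) ψ)
  filter_upwards [h1, h2, h3] with x e1 e2 e3
  simp only [Function.comp_apply] at e2 e3
  show (mulU (mfun_meas lam) (mfun_norm lam) _ : ℝ → ℂ) x = _
  rw [e1, e2, e3]

lemma Vop_coe' (lam : ℝ) (ψ : Lp ℂ 2 (volume : Measure ℝ)) (t : ℝ) (ht : 0 ≤ t) :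
    (Vop lam ψ t : ℝ → ℂ) =ᵐ[volume]
      fun x => (ψ : ℝ → ℂ) (x - t) *
        (1 + (Complex.exp (Complex.I * lam) - 1) * (Ico (0:ℝ) t).indicator 1 x) := by
  filter_upwards [Vop_coe lam ψ t] with x hx
  rw [hx, ← mul_assoc, mfun_mul lam t x ht, mul_comm]

lemma Vop_cont (lam : ℝ) (ψ : Lp ℂ 2 (volume : Measure ℝ)) : Continuous (Vop lam ψ) := by
  apply (isometry_mulU (mfun_meas lam) (mfun_norm lam)).continuous.comp
  exact Continuous.compMeasurePreservingLp continuous_const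
    (ContinuousMap.continuous_of_continuous_uncurry
      (fun t => ContinuousMap.mk (fun x : ℝ => x - t) (by continuity))
      (by exact continuous_snd.sub continuous_fst))
    (fun t => measurePreserving_sub_right volume t) (by norm_num)

lemma Vop_norm (lam : ℝ) (ψ : Lp ℂ 2 (volume : Measure ℝ)) (t : ℝ) :
    ‖Vop lam ψ t‖ = ‖ψ‖ := by
  rw [Vop, norm_mulU, Lp.norm_compMeasurePreserving, norm_mulU]


/-- the integrand as a function of `(t, x)` -/
def uu (lam μ : ℝ) (ψ : Lp ℂ 2 (volume : Measure ℝ)) (t x : ℝ) : ℂ :=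
  (Real.exp (-μ * t) : ℂ) * ((ψ : ℝ → ℂ) (x - t) *
    (1 + (Complex.exp (Complex.I * lam) - 1) * (Ico (0:ℝ) t).indicator 1 x))

lemma ind_norm_le (lam : ℝ) (t x : ℝ) :
    ‖(1 : ℂ) + (Complex.exp (Complex.I * lam) - 1) * (Ico (0:ℝ) t).indicator 1 x‖ ≤
      1 + ‖Complex.exp (Complex.I * lam) - 1‖ := by
  by_cases h : x ∈ Ico (0:ℝ) t
  · rw [indicator_of_mem h]
    simp only [Pi.one_apply, mul_one]
    exact (norm_add_le _ _).trans (by rw [norm_one])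
  · rw [indicator_of_notMem h]
    simp only [mul_zero, add_zero, norm_one]
    linarith [norm_nonneg (Complex.exp (Complex.I * lam) - 1)]

lemma u_bound (lam μ : ℝ) (ψ : Lp ℂ 2 (volume : Measure ℝ)) (t x : ℝ) :
    ‖uu lam μ ψ t x‖ ≤ Real.exp (-μ * t) *
      ((1 + ‖Complex.exp (Complex.I * lam) - 1‖) * ‖(ψ : ℝ → ℂ) (x - t)‖) := by
  unfold uu
  rw [norm_mul, norm_mul, Complex.norm_real, Real.norm_eq_abs, Real.abs_exp,
    mul_comm (1 + ‖Complex.exp (Complex.I * lam) - 1‖) ‖(ψ : ℝ → ℂ) (x - t)‖]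
  gcongr
  exact ind_norm_le lam t x

lemma uu_meas_prod (lam μ : ℝ) (ψ : Lp ℂ 2 (volume : Measure ℝ)) :
    AEStronglyMeasurable (fun p : ℝ × ℝ => uu lam μ ψ p.1 p.2)
      ((volume.restrict (Ioi (0:ℝ))).prod volume) := by
  unfold uu
  apply AEStronglyMeasurable.mul
  · exact (Complex.continuous_ofReal.comp
      (Real.continuous_exp.comp (continuous_const.mul continuous_fst))).aestronglyMeasurable
  apply AEStronglyMeasurable.mul
  · exact ((Lp.stronglyMeasurable ψ).comp_measurable
      (measurable_snd.sub measurable_fst)).aestronglyMeasurable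
  apply AEStronglyMeasurable.add aestronglyMeasurable_const
  apply AEStronglyMeasurable.const_mul
  have heq : (fun p : ℝ × ℝ => (Ico (0:ℝ) p.1).indicator (1 : ℝ → ℂ) p.2)
      = ({p : ℝ × ℝ | 0 ≤ p.2 ∧ p.2 < p.1}).indicator (fun _ => (1:ℂ)) := by
    funext p
    simp only [indicator_apply, mem_Ico, mem_setOf_eq, Pi.one_apply]
  rw [heq]
  exact (measurable_const.indicator
    ((measurableSet_le measurable_const measurable_snd).inter
      (measurableSet_lt measurable_snd measurable_fst))).aestronglyMeasurable

lemma psi_sq_shift (ψ : Lp ℂ 2 (volume : Measure ℝ)) (t : ℝ) :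
    Integrable (fun x : ℝ => ‖(ψ : ℝ → ℂ) (x - t)‖ ^ 2) volume :=
  ((measurePreserving_sub_right volume t).integrable_comp_emb
    (MeasurableEquiv.subRight t).measurableEmbedding).mpr (sq_integrable ψ)

lemma psi_sq_shift_int (ψ : Lp ℂ 2 (volume : Measure ℝ)) (t : ℝ) :
    ∫ x : ℝ, ‖(ψ : ℝ → ℂ) (x - t)‖ ^ 2 = ∫ x : ℝ, ‖(ψ : ℝ → ℂ) x‖ ^ 2 :=
  (measurePreserving_sub_right volume t).integral_comp
    (MeasurableEquiv.subRight t).measurableEmbedding (fun y => ‖(ψ : ℝ → ℂ) y‖ ^ 2)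

lemma ptb (lam μ : ℝ) (ψ : Lp ℂ 2 (volume : Measure ℝ)) (v : ℝ → ℂ) (t x : ℝ) :
    ‖v x * uu lam μ ψ t x‖ ≤ Real.exp (-μ * t) *
      ((1 + ‖Complex.exp (Complex.I * lam) - 1‖) *
        ((‖v x‖ ^ 2 + ‖(ψ : ℝ → ℂ) (x - t)‖ ^ 2) / 2)) := by
  rw [norm_mul]
  have h1 := u_bound lam μ ψ t x
  have h2 : ‖v x‖ * ‖(ψ : ℝ → ℂ) (x - t)‖ ≤ (‖v x‖ ^ 2 + ‖(ψ : ℝ → ℂ) (x - t)‖ ^ 2) / 2 := by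
    nlinarith [sq_nonneg (‖v x‖ - ‖(ψ : ℝ → ℂ) (x - t)‖)]
  have h3 := norm_nonneg (v x)
  calc ‖v x‖ * ‖uu lam μ ψ t x‖
      ≤ ‖v x‖ * (Real.exp (-μ * t) * ((1 + ‖Complex.exp (Complex.I * lam) - 1‖) *
          ‖(ψ : ℝ → ℂ) (x - t)‖)) := mul_le_mul_of_nonneg_left h1 h3
    _ = Real.exp (-μ * t) * ((1 + ‖Complex.exp (Complex.I * lam) - 1‖) *
          (‖v x‖ * ‖(ψ : ℝ → ℂ) (x - t)‖)) := by ring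
    _ ≤ Real.exp (-μ * t) * ((1 + ‖Complex.exp (Complex.I * lam) - 1‖) *
          ((‖v x‖ ^ 2 + ‖(ψ : ℝ → ℂ) (x - t)‖ ^ 2) / 2)) := by
        gcongr

lemma slice_meas (lam μ : ℝ) (ψ : Lp ℂ 2 (volume : Measure ℝ)) (t : ℝ) :
    AEStronglyMeasurable (fun x => uu lam μ ψ t x) volume := by
  unfold uu
  apply AEStronglyMeasurable.const_mul
  apply AEStronglyMeasurable.mul
  · exact ((Lp.stronglyMeasurable ψ).comp_measurable
      (measurable_id.sub measurable_const)).aestronglyMeasurable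
  · exact (aestronglyMeasurable_const.add
      (((measurable_const.indicator measurableSet_Ico).aestronglyMeasurable
        (μ := volume)).const_mul _))

lemma slice_int (lam μ : ℝ) (ψ : Lp ℂ 2 (volume : Measure ℝ)) (v : ℝ → ℂ)
    (hvm : StronglyMeasurable v) (hv2 : Integrable (fun x => ‖v x‖ ^ 2) volume) (t : ℝ) :
    Integrable (fun x => v x * uu lam μ ψ t x) volume := by
  apply Integrable.mono'
    (g := fun x => Real.exp (-μ * t) * ((1 + ‖Complex.exp (Complex.I * lam) - 1‖) *
      ((‖v x‖ ^ 2 + ‖(ψ : ℝ → ℂ) (x - t)‖ ^ 2) / 2)))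
  · exact (((hv2.add (psi_sq_shift ψ t)).div_const 2).const_mul _).const_mul _
  · exact hvm.aestronglyMeasurable.mul (slice_meas lam μ ψ t)
  · exact Filter.Eventually.of_forall fun x => ptb lam μ ψ v t x

lemma key (lam μ : ℝ) (hμ : 0 < μ) (ψ : Lp ℂ 2 (volume : Measure ℝ)) (v : ℝ → ℂ)
    (hvm : StronglyMeasurable v) (hv2 : Integrable (fun x => ‖v x‖ ^ 2) volume) :
    Integrable (fun p : ℝ × ℝ => v p.2 * uu lam μ ψ p.1 p.2)
      ((volume.restrict (Ioi (0:ℝ))).prod volume) := by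
  have hmeas : AEStronglyMeasurable (fun p : ℝ × ℝ => v p.2 * uu lam μ ψ p.1 p.2)
      ((volume.restrict (Ioi (0:ℝ))).prod volume) :=
    ((hvm.comp_measurable measurable_snd).aestronglyMeasurable).mul (uu_meas_prod lam μ ψ)
  rw [integrable_prod_iff hmeas]
  constructor
  · exact Filter.Eventually.of_forall fun t => slice_int lam μ ψ v hvm hv2 t
  · set K := 1 + ‖Complex.exp (Complex.I * lam) - 1‖ with hK
    have hK0 : (0:ℝ) ≤ K := by positivity
    set C := K * (((∫ x : ℝ, ‖v x‖ ^ 2) + ∫ x : ℝ, ‖(ψ : ℝ → ℂ) x‖ ^ 2) / 2) with hC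
    apply Integrable.mono' (g := fun t => Real.exp (-μ * t) * C)
    · exact (exp_neg_integrableOn_Ioi 0 hμ).mul_const C
    · exact hmeas.norm.integral_prod_right'
    · refine Filter.Eventually.of_forall fun t => ?_
      rw [Real.norm_eq_abs, _root_.abs_of_nonneg (integral_nonneg fun x => norm_nonneg _)]
      have hgint : Integrable (fun x => Real.exp (-μ * t) * (K *
          ((‖v x‖ ^ 2 + ‖(ψ : ℝ → ℂ) (x - t)‖ ^ 2) / 2))) volume :=
        (((hv2.add (psi_sq_shift ψ t)).div_const 2).const_mul _).const_mul _
      calc ∫ x : ℝ, ‖v x * uu lam μ ψ t x‖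
          ≤ ∫ x : ℝ, Real.exp (-μ * t) * (K *
              ((‖v x‖ ^ 2 + ‖(ψ : ℝ → ℂ) (x - t)‖ ^ 2) / 2)) :=
            integral_mono_of_nonneg (Filter.Eventually.of_forall fun x => norm_nonneg _)
              hgint (Filter.Eventually.of_forall fun x => ptb lam μ ψ v t x)
        _ = Real.exp (-μ * t) * C := by
            rw [integral_const_mul, integral_const_mul, integral_div,
              integral_add hv2 (psi_sq_shift ψ t), psi_sq_shift_int ψ t]


lemma tslice_int (μ : ℝ) (hμ : 0 < μ) (ψ : Lp ℂ 2 (volume : Measure ℝ)) (x : ℝ) :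
    Integrable (fun t => (Real.exp (-μ * t) : ℂ) * (ψ : ℝ → ℂ) (x - t))
      (volume.restrict (Ioi (0:ℝ))) := by
  have hψ2 : Integrable (fun t : ℝ => ‖(ψ : ℝ → ℂ) (x - t)‖ ^ 2) volume :=
    ((Measure.measurePreserving_sub_left volume x).integrable_comp_emb
      (MeasurableEquiv.subLeft x).measurableEmbedding).mpr (sq_integrable ψ)
  have hexp2 : IntegrableOn (fun t : ℝ => (Real.exp (-μ * t)) ^ 2) (Ioi (0:ℝ)) volume := by
    have heq : (fun t : ℝ => (Real.exp (-μ * t)) ^ 2) = fun t => Real.exp (-(2*μ) * t) :=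
      funext fun t => by rw [sq, ← Real.exp_add]; congr 1; ring
    rw [heq]
    exact exp_neg_integrableOn_Ioi 0 (by linarith)
  apply Integrable.mono'
    (g := fun t => ((Real.exp (-μ * t)) ^ 2 + ‖(ψ : ℝ → ℂ) (x - t)‖ ^ 2) / 2)
  · exact (hexp2.add hψ2.integrableOn).div_const 2
  · exact ((Complex.measurable_ofReal.comp
      (Real.measurable_exp.comp (measurable_const.mul measurable_id))).aestronglyMeasurable.mul
      ((Lp.stronglyMeasurable ψ).comp_measurable
        (measurable_const.sub measurable_id)).aestronglyMeasurable).restrict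
  · refine Filter.Eventually.of_forall fun t => ?_
    rw [norm_mul, Complex.norm_real, Real.norm_eq_abs, Real.abs_exp]
    nlinarith [sq_nonneg (Real.exp (-μ * t) - ‖(ψ : ℝ → ℂ) (x - t)‖),
      (Real.exp_pos (-μ * t)).le, norm_nonneg ((ψ : ℝ → ℂ) (x - t))]

end ResolventAux

open ResolventAux


/-- For every `λ ∈ ℝ`, `μ > 0` and `ψ ∈ L²(ℝ,ℂ)`, the Bochner integral
`∫_0^∞ e^{-μt} U_t ψ dt` (taken in `L²(ℝ,ℂ)`, where `U_t` is the limit evolution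
`(U_t ψ)(x) = ψ(x-t)(1 + (e^{iλ}-1)𝟙_{[0,t)}(x))`) is represented almost everywhere by
`R_μψ(x) = ∫_0^∞ e^{-μt} ψ(x-t) dt
  + 𝟙_{(0,∞)}(x)·(e^{iλ}-1)·e^{-μx}·∫_0^∞ e^{-μt} ψ(-t) dt`. -/
theorem resolvent_representation (lam : ℝ)
    (U : ℝ → Lp ℂ 2 (volume : Measure ℝ) → Lp ℂ 2 (volume : Measure ℝ))
    (hU : ∀ t : ℝ, 0 ≤ t → ∀ ψ : Lp ℂ 2 (volume : Measure ℝ),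
      (U t ψ : ℝ → ℂ) =ᵐ[volume] fun x =>
        (ψ : ℝ → ℂ) (x - t) *
          (1 + (Complex.exp (Complex.I * lam) - 1) * (Set.Ico (0:ℝ) t).indicator 1 x))
    (μ : ℝ) (hμ : 0 < μ) (ψ : Lp ℂ 2 (volume : Measure ℝ)) :
    ((∫ t in Set.Ioi (0:ℝ), Real.exp (-μ * t) • U t ψ : Lp ℂ 2 (volume : Measure ℝ)) : ℝ → ℂ)
      =ᵐ[volume] fun x =>
        (∫ t in Set.Ioi (0:ℝ), (Real.exp (-μ * t) : ℂ) * (ψ : ℝ → ℂ) (x - t)) +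
          (Set.Ioi (0:ℝ)).indicator 1 x * (Complex.exp (Complex.I * lam) - 1) *
            Complex.exp (-(μ : ℂ) * x) *
            (∫ t in Set.Ioi (0:ℝ), (Real.exp (-μ * t) : ℂ) * (ψ : ℝ → ℂ) (-t)) := by
  classical
  have hUV : EqOn (fun t => Real.exp (-μ * t) • U t ψ)
      (fun t => Real.exp (-μ * t) • Vop lam ψ t) (Ioi (0:ℝ)) := by
    intro t ht
    simp only
    congr 1
    exact Lp.ext ((hU t (le_of_lt ht) ψ).trans (Vop_coe' lam ψ t (le_of_lt ht)).symm)
  rw [setIntegral_congr_fun measurableSet_Ioi hUV]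
  have hGint : Integrable (fun t => Real.exp (-μ * t) • Vop lam ψ t)
      (volume.restrict (Ioi (0:ℝ))) := by
    apply Integrable.mono' (g := fun t => Real.exp (-μ * t) * ‖ψ‖)
    · exact (exp_neg_integrableOn_Ioi 0 hμ).mul_const _
    · exact ((Real.continuous_exp.comp (continuous_const.mul continuous_id)).smul
        (Vop_cont lam ψ)).aestronglyMeasurable.restrict
    · refine Filter.Eventually.of_forall fun t => le_of_eq ?_
      rw [norm_smul, Vop_norm, Real.norm_eq_abs, Real.abs_exp]
  set Iint : Lp ℂ 2 (volume : Measure ℝ) :=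
    ∫ t in Ioi (0:ℝ), Real.exp (-μ * t) • Vop lam ψ t with hIint
  set A : ℝ → ℂ := fun x => ∫ t in Ioi (0:ℝ), uu lam μ ψ t x with hA
  -- duality step
  have step : ∀ v : ℝ → ℂ, StronglyMeasurable v → Integrable (fun x => ‖v x‖ ^ 2) volume →
      ∀ φ : Lp ℂ 2 (volume : Measure ℝ),
      (v =ᵐ[volume] fun x => (starRingEnd ℂ) ((φ : ℝ → ℂ) x)) →
      (inner ℂ φ Iint : ℂ) = ∫ x : ℝ, v x * A x := by
    intro v hvm hv2 φ hvφ
    have hkey := key lam μ hμ ψ v hvm hv2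
    have e1 : ∫ t in Ioi (0:ℝ), (innerSL ℂ φ) (Real.exp (-μ * t) • Vop lam ψ t) =
        (innerSL ℂ φ) Iint :=
      ContinuousLinearMap.integral_comp_comm (innerSL ℂ φ) hGint
    have e2 : ∀ t ∈ Ioi (0:ℝ), (innerSL ℂ φ) (Real.exp (-μ * t) • Vop lam ψ t) =
        ∫ x : ℝ, v x * uu lam μ ψ t x := by
      intro t ht
      rw [innerSL_apply_apply, L2.inner_def]
      apply integral_congr_ae
      filter_upwards [Lp.coeFn_smul (Real.exp (-μ * t)) (Vop lam ψ t),
        Vop_coe' lam ψ t (le_of_lt ht), hvφ] with x h1 h2 h3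
      rw [RCLike.inner_apply, h1, Pi.smul_apply, h2, h3]
      unfold uu
      rw [Complex.real_smul]
      ring
    have e3 : ∫ t in Ioi (0:ℝ), (innerSL ℂ φ) (Real.exp (-μ * t) • Vop lam ψ t) =
        ∫ t in Ioi (0:ℝ), ∫ x : ℝ, v x * uu lam μ ψ t x :=
      setIntegral_congr_fun measurableSet_Ioi fun t ht => e2 t ht
    have e4 : ∫ t in Ioi (0:ℝ), ∫ x : ℝ, v x * uu lam μ ψ t x =
        ∫ x : ℝ, ∫ t in Ioi (0:ℝ), v x * uu lam μ ψ t x :=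
      integral_integral_swap hkey
    have e5 : ∫ x : ℝ, ∫ t in Ioi (0:ℝ), v x * uu lam μ ψ t x = ∫ x : ℝ, v x * A x := by
      congr 1
      funext x
      rw [integral_const_mul, hA]
    rw [innerSL_apply_apply] at e1
    rw [← e1, e3, e4, e5]
  -- set-integral comparison gives the a.e. identification with A
  have hIA : (Iint : ℝ → ℂ) =ᵐ[volume] A := by
    apply ae_eq_of_forall_setIntegral_eq_of_sigmaFinite
    · intro S hS hfin
      haveI := Fact.mk hfin
      exact ((Lp.memLp Iint).restrict S).integrable one_le_two
    · intro S hS hfin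
      have hvm : StronglyMeasurable (S.indicator (fun _ => (1:ℂ))) :=
        (measurable_const.indicator hS).stronglyMeasurable
      have hv2 : Integrable (fun x => ‖S.indicator (fun _ => (1:ℂ)) x‖ ^ 2) volume := by
        have heq : (fun x => ‖S.indicator (fun _ => (1:ℂ)) x‖ ^ 2)
            = S.indicator (fun _ => (1:ℝ)) := by
          funext x; by_cases hx : x ∈ S <;> simp [hx]
        rw [heq, integrable_indicator_iff hS]
        exact integrableOn_const hfin.ne
      have hint := (key lam μ hμ ψ _ hvm hv2).integral_prod_right
      have heq1 : (fun x : ℝ => ∫ t in Ioi (0:ℝ), S.indicator (fun _ => (1:ℂ)) x *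
          uu lam μ ψ t x) = S.indicator A := by
        funext x
        rw [integral_const_mul]
        by_cases hx : x ∈ S
        · rw [indicator_of_mem hx, indicator_of_mem hx, one_mul, hA]
        · rw [indicator_of_notMem hx, indicator_of_notMem hx, zero_mul]
      rw [heq1] at hint
      exact (integrable_indicator_iff hS).mp hint
    · intro S hS hfin
      have hvm : StronglyMeasurable (S.indicator (fun _ => (1:ℂ))) :=
        (measurable_const.indicator hS).stronglyMeasurable
      have hv2 : Integrable (fun x => ‖S.indicator (fun _ => (1:ℂ)) x‖ ^ 2) volume := by
        have heq : (fun x => ‖S.indicator (fun _ => (1:ℂ)) x‖ ^ 2)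
            = S.indicator (fun _ => (1:ℝ)) := by
          funext x; by_cases hx : x ∈ S <;> simp [hx]
        rw [heq, integrable_indicator_iff hS]
        exact integrableOn_const hfin.ne
      have hvφ : S.indicator (fun _ => (1:ℂ)) =ᵐ[volume]
          fun x => (starRingEnd ℂ) ((indicatorConstLp 2 hS hfin.ne (1:ℂ) : ℝ → ℂ) x) := by
        filter_upwards [indicatorConstLp_coeFn (p := 2) (hs := hS) (hμs := hfin.ne)
          (c := (1:ℂ))] with x hx
        rw [hx]
        by_cases hxS : x ∈ S <;> simp [hxS]
      have hstep := step _ hvm hv2 (indicatorConstLp 2 hS hfin.ne (1:ℂ)) hvφ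
      have hL : (inner ℂ (indicatorConstLp 2 hS hfin.ne (1:ℂ)) Iint : ℂ) =
          ∫ x in S, (Iint : ℝ → ℂ) x := by
        rw [L2.inner_def, ← integral_indicator hS]
        apply integral_congr_ae
        filter_upwards [indicatorConstLp_coeFn (p := 2) (hs := hS) (hμs := hfin.ne)
          (c := (1:ℂ))] with x hx
        rw [RCLike.inner_apply, hx]
        by_cases hxS : x ∈ S <;> simp [hxS]
      have hR : ∫ x : ℝ, S.indicator (fun _ => (1:ℂ)) x * A x = ∫ x in S, A x := by
        rw [← integral_indicator hS]
        congr 1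
        funext x
        by_cases hxS : x ∈ S <;> simp [hxS]
      exact (hL.symm.trans hstep).trans hR
  -- identify A with the resolvent formula
  have hAR : A =ᵐ[volume] fun x =>
      (∫ t in Set.Ioi (0:ℝ), (Real.exp (-μ * t) : ℂ) * (ψ : ℝ → ℂ) (x - t)) +
        (Set.Ioi (0:ℝ)).indicator 1 x * (Complex.exp (Complex.I * lam) - 1) *
          Complex.exp (-(μ : ℂ) * x) *
          (∫ t in Set.Ioi (0:ℝ), (Real.exp (-μ * t) : ℂ) * (ψ : ℝ → ℂ) (-t)) := by
    have hae : ∀ᵐ x : ℝ ∂volume, x ≠ 0 := by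
      rw [ae_iff]
      simp only [not_not, setOf_eq_eq_singleton]
      exact measure_singleton 0
    filter_upwards [hae] with x hx0
    have hint1 := tslice_int μ hμ ψ x
    simp only [hA]
    rcases hx0.lt_or_gt with hx | hx
    · have huu : ∀ t : ℝ, uu lam μ ψ t x = (Real.exp (-μ * t) : ℂ) * (ψ : ℝ → ℂ) (x - t) := by
        intro t
        unfold uu
        rw [indicator_of_notMem (by simp only [mem_Ico, not_and, not_lt]; intro h; linarith)]
        ring
      simp only [huu]
      rw [indicator_of_notMem (by simp only [mem_Ioi, not_lt]; linarith)]
      simp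
    · have hind : ∀ t : ℝ, (Ico (0:ℝ) t).indicator (1 : ℝ → ℂ) x
          = (Ioi x).indicator (fun _ => (1:ℂ)) t := by
        intro t
        by_cases h : x < t
        · rw [indicator_of_mem (mem_Ico.mpr ⟨hx.le, h⟩), indicator_of_mem (mem_Ioi.mpr h)]
          simp
        · rw [indicator_of_notMem (fun hc => h (mem_Ico.mp hc).2),
            indicator_of_notMem (by simpa using h)]
      have huu2 : ∀ t : ℝ, uu lam μ ψ t x = (Real.exp (-μ * t) : ℂ) * (ψ : ℝ → ℂ) (x - t)
          + (Complex.exp (Complex.I * lam) - 1) *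
            ((Ioi x).indicator
              (fun s => (Real.exp (-μ * s) : ℂ) * (ψ : ℝ → ℂ) (x - s)) t) := by
        intro t
        unfold uu
        rw [hind t]
        by_cases h : t ∈ Ioi x
        · rw [indicator_of_mem h, indicator_of_mem h]; ring
        · rw [indicator_of_notMem h, indicator_of_notMem h]; ring
      simp only [huu2]
      rw [integral_add hint1 ((hint1.indicator measurableSet_Ioi).const_mul _),
        integral_const_mul]
      congr 1
      have h1 : ∫ t in Ioi (0:ℝ), (Ioi x).indicator
            (fun s => (Real.exp (-μ * s) : ℂ) * (ψ : ℝ → ℂ) (x - s)) t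
          = ∫ t in Ioi x, (Real.exp (-μ * t) : ℂ) * (ψ : ℝ → ℂ) (x - t) := by
        rw [setIntegral_indicator measurableSet_Ioi, Ioi_inter_Ioi, max_eq_right hx.le]
      have hpre : (fun u : ℝ => u + x) ⁻¹' (Ioi x) = Ioi (0:ℝ) := by
        ext u
        simp [mem_Ioi]
      have h3 := (measurePreserving_add_right volume x).setIntegral_preimage_emb
        (MeasurableEquiv.addRight x).measurableEmbedding
        (fun t => (Real.exp (-μ * t) : ℂ) * (ψ : ℝ → ℂ) (x - t)) (Ioi x)
      rw [hpre] at h3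
      have h4 : ∫ u in Ioi (0:ℝ), (Real.exp (-μ * (u + x)) : ℂ) * (ψ : ℝ → ℂ) (x - (u + x))
          = Complex.exp (-(μ:ℂ) * x) *
            ∫ t in Ioi (0:ℝ), (Real.exp (-μ * t) : ℂ) * (ψ : ℝ → ℂ) (-t) := by
        rw [← integral_const_mul]
        apply setIntegral_congr_fun measurableSet_Ioi
        intro u _
        simp only
        have e1 : x - (u + x) = -u := by ring
        have e2 : (Real.exp (-μ * (u + x)) : ℂ)
            = Complex.exp (-(μ:ℂ) * x) * (Real.exp (-μ * u) : ℂ) := by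
          rw [Complex.ofReal_exp, Complex.ofReal_exp, ← Complex.exp_add]
          congr 1
          push_cast
          ring
        rw [e1, e2]
        ring
      rw [h1, ← h3, h4, indicator_of_mem (mem_Ioi.mpr hx)]
      simp only [Pi.one_apply, one_mul]
      ring
  exact hIA.trans hAR
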